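/- Let d ≥ 1 and let G be a d-regular graph on n vertices with at least one edge, and let U be a real number. If for every nonempty subset A of V(G) one has 2·e(A)/(d·|A|) − |A|/n < U (equivalently: no subset of size xn induces yxn/2 edges with y/d − x ≥ U), then q*(G) < U. -/

import Mathlib

open Finset

noncomputable section

variable {V : Type*} [Fintype V] [DecidableEq V]

/-- The number of edges of `G` with both endpoints in the set `A`, as a real number
(ordered adjacent pairs inside `A`, divided by two). -/
noncomputable def edgesIn (G : SimpleGraph V) (A : Finset V) : ℝ :=
  (Nat.card {p : V × V // G.Adj p.1 p.2 ∧ p.1 ∈ A ∧ p.2 ∈ A} : ℝ) / 2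

/-- The number of edges of `G`, as a real number. -/
noncomputable def edgeCount (G : SimpleGraph V) : ℝ := (Nat.card G.edgeSet : ℝ)

/-- The degree of a vertex, as a real number. -/
noncomputable def degR (G : SimpleGraph V) (v : V) : ℝ := (Nat.card (G.neighborSet v) : ℝ)

/-- The modularity `q_𝒜(G)` of a partition `𝒜` of the vertex set of `G`. -/
noncomputable def modularityOf (G : SimpleGraph V)
    (P : Finpartition (Finset.univ : Finset V)) : ℝ :=
  ∑ A ∈ P.parts,
    (edgesIn G A / edgeCount G - (∑ v ∈ A, degR G v) ^ 2 / (4 * edgeCount G ^ 2))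

/-- The modularity `q*(G)`: the maximum of `q_𝒜(G)` over all partitions `𝒜` of `V(G)`. -/
noncomputable def modularity (G : SimpleGraph V) : ℝ :=
  sSup {q : ℝ | ∃ P : Finpartition (Finset.univ : Finset V), q = modularityOf G P}

/-- if `G` is a `d`-regular graph (`d ≥ 1`) on `n` vertices with at least one
edge, and every nonempty vertex subset `A` satisfies `2·e(A)/(d·|A|) − |A|/n < U`, then
`q*(G) < U`. -/
theorem statement0 (G : SimpleGraph V) [DecidableRel G.Adj] (d n : ℕ) (hd : 1 ≤ d)
    (hreg : G.IsRegularOfDegree d) (hn : n = Fintype.card V)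
    (hE : G.edgeFinset.Nonempty) (U : ℝ)
    (hU : ∀ A : Finset V, A.Nonempty →
      2 * edgesIn G A / ((d : ℝ) * A.card) - (A.card : ℝ) / n < U) :
    modularity G < U := by
  classical
  -- basic facts
  have hEc : edgeCount G = (G.edgeFinset.card : ℝ) := by
    simp [edgeCount, Nat.card_eq_fintype_card, Set.toFinset_card, SimpleGraph.edgeFinset]
  have hm0 : (0:ℝ) < edgeCount G := by
    rw [hEc]; exact_mod_cast Finset.card_pos.2 hE
  have hdeg : ∀ v, degR G v = (d : ℝ) := by
    intro v
    rw [degR, Nat.card_eq_fintype_card, Fintype.card_congr (Equiv.refl _),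
      G.card_neighborSet_eq_degree, hreg v]
  have hsumdeg : (∑ v : V, G.degree v : ℝ) = (d : ℝ) * n := by
    have : ∀ v : V, G.degree v = d := hreg
    rw [hn]
    simp [this, Finset.sum_const, mul_comm]
  have h2m : 2 * edgeCount G = (d : ℝ) * n := by
    rw [hEc, ← hsumdeg]
    exact_mod_cast (SimpleGraph.sum_degrees_eq_twice_card_edges G).symm
  have hd' : (0:ℝ) < d := by exact_mod_cast hd
  have hn' : (0:ℝ) < n := by
    nlinarith
  -- bound for each partition
  have key : ∀ P : Finpartition (Finset.univ : Finset V), modularityOf G P < U := by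
    intro P
    have huniv : (Finset.univ : Finset V) ≠ ⊥ := by
      obtain ⟨e, he⟩ := hE
      have : Nonempty V := ⟨e.out.1⟩
      obtain ⟨v⟩ := this
      intro h
      exact absurd (h ▸ Finset.mem_univ v) (by simp)
    have hPne : P.parts.Nonempty := P.parts_nonempty huniv
    have hterm : ∀ A ∈ P.parts,
        edgesIn G A / edgeCount G - (∑ v ∈ A, degR G v) ^ 2 / (4 * edgeCount G ^ 2)
          < U * A.card / n := by
      intro A hA
      have hAne : A.Nonempty := P.nonempty_of_mem_parts hA
      have ha : (0:ℝ) < A.card := by exact_mod_cast Finset.card_pos.2 hAne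
      have hsA : (∑ v ∈ A, degR G v) = (d : ℝ) * A.card := by
        rw [Finset.sum_congr rfl fun v _ => hdeg v, Finset.sum_const]
        ring
      have hUA := hU A hAne
      have he0 : 0 ≤ edgesIn G A := by
        have : (0:ℝ) ≤ (Nat.card {p : V × V // G.Adj p.1 p.2 ∧ p.1 ∈ A ∧ p.2 ∈ A} : ℝ) :=
          Nat.cast_nonneg _
        unfold edgesIn; linarith
      rw [hsA]
      -- from hUA : 2 * e / (d*a) - a/n < U
      have h1 : 2 * edgesIn G A < (U + (A.card:ℝ)/n) * ((d:ℝ) * A.card) := by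
        have hda : (0:ℝ) < (d:ℝ) * A.card := by positivity
        have := (div_lt_iff₀ hda).mp (by linarith [hUA] :
          2 * edgesIn G A / ((d:ℝ) * A.card) < U + (A.card:ℝ)/n)
        linarith
      have hdn : (0:ℝ) < (d:ℝ) * n := by positivity
      have hq : ((d:ℝ) * A.card) ^ 2 / (4 * edgeCount G ^ 2)
          = (A.card:ℝ)^2 / (n:ℝ)^2 := by
        rw [show (4:ℝ) * edgeCount G ^ 2 = (2 * edgeCount G)^2 by ring, h2m]
        field_simp
      have h2 : edgesIn G A / edgeCount G = 2 * edgesIn G A / ((d:ℝ) * n) := by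
        rw [← h2m]
        field_simp
      rw [hq, h2]
      have h3 : 2 * edgesIn G A / ((d:ℝ) * n)
          < ((U + (A.card:ℝ)/n) * ((d:ℝ) * A.card)) / ((d:ℝ) * n) :=
        div_lt_div_of_pos_right h1 hdn
      have h4 : ((U + (A.card:ℝ)/n) * ((d:ℝ) * A.card)) / ((d:ℝ) * n)
          = U * A.card / n + (A.card:ℝ)^2 / (n:ℝ)^2 := by
        field_simp
      linarith [h3, h4 ▸ h3]
    calc modularityOf G P < ∑ A ∈ P.parts, U * A.card / n :=
          Finset.sum_lt_sum_of_nonempty hPne hterm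
      _ = U := by
          rw [← Finset.sum_div, ← Finset.mul_sum]
          have : (∑ A ∈ P.parts, (A.card : ℝ)) = n := by
            rw [hn]
            exact_mod_cast congrArg Nat.cast P.sum_card_parts
          rw [this, mul_div_assoc, div_self (ne_of_gt hn'), mul_one]
  -- the sup is attained
  have hfin : Finite (Finpartition (Finset.univ : Finset V)) := by
    exact Finite.of_injective (fun P => P.parts) fun P Q h => Finpartition.ext (by simpa using h)
  set S := {q : ℝ | ∃ P : Finpartition (Finset.univ : Finset V), q = modularityOf G P} with hS
  have hSfin : S.Finite := by
    have : S = Set.range (fun P : Finpartition (Finset.univ : Finset V) => modularityOf G P) := by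
      ext q; simp [hS, eq_comm]
    rw [this]
    exact Set.finite_range _
  have hSne : S.Nonempty := ⟨modularityOf G ⊥, ⊥, rfl⟩
  have := hSne.csSup_mem hSfin
  obtain ⟨P, hP⟩ := this
  rw [modularity, ← hS, hP]
  exact key P


end
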